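/- arXiv:2010.11094 — 4 statements merged into one kernel-verified Lean document; each statement's English description precedes it below -/
import Mathlib

section
/- Let X be a nonempty compact metric space, let f : X → X be a continuous map, let x₀ ∈ X, and let Y = ω(x₀) be the ω-limit set of x₀ under f. Then there is no subset U ⊆ Y that is open in the subspace topology of Y, nonempty, and a proper subset of Y, such that f maps the closure of U in Y into U. Equivalently: if U ⊆ Y is nonempty, open in Y, and f(cl_Y(U)) ⊆ U, then U = Y. -/
open Metric Set Function

/-- **Bowen's lemma for ω-limit sets (non-invertible version).**
Let `X` be a nonempty compact metric space, `f : X → X` continuous, `x₀ ∈ X`, and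
`Y = ω(x₀)` the ω-limit set of `x₀`, i.e. `Y = ⋂ N, closure { f^[n] x₀ : n ≥ N }`.
If `U ⊆ Y` is nonempty, open in the subspace topology of `Y`, and `f` maps the
closure of `U` in `Y` (which equals `closure U ∩ Y` since `Y` is closed) into `U`,
then `U = Y`. -/
theorem omegaLimit_no_trapping_open_subset
    {X : Type*} [MetricSpace X] [CompactSpace X] [Nonempty X]
    (f : X → X) (hf : Continuous f) (x₀ : X)
    (Y : Set X) (hY : Y = ⋂ N : ℕ, closure ((fun n => f^[n] x₀) '' Set.Ici N))
    (U : Set X) (hUY : U ⊆ Y) (hUne : U.Nonempty)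
    (hUopen : IsOpen ((Subtype.val ⁻¹' U : Set Y)))
    (hmap : f '' (closure U ∩ Y) ⊆ U) :
    U = Y := by
  by_contra hne
  set K : Set X := closure U ∩ Y with hK
  have hYclosed : IsClosed Y := by
    rw [hY]; exact isClosed_iInter fun N => isClosed_closure
  have hYne : Y.Nonempty := hUne.mono hUY
  have hUK : U ⊆ K := fun x hx => ⟨subset_closure hx, hUY hx⟩
  have hKclosed : IsClosed K := isClosed_closure.inter hYclosed
  have hKcompact : IsCompact K := hKclosed.isCompact
  have hKne : K.Nonempty := hUne.mono hUK
  -- the complement A := Y \ U is closed, compact, nonempty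
  obtain ⟨z, hzY, hzU⟩ : ∃ z, z ∈ Y ∧ z ∉ U := by
    by_contra h
    push_neg at h
    exact hne (Subset.antisymm hUY fun y hy => h y hy)
  obtain ⟨V, hVopen, hVU⟩ := isOpen_induced_iff.mp hUopen
  have hiff : ∀ x, x ∈ Y → (x ∈ V ↔ x ∈ U) := fun x hx => Set.ext_iff.mp hVU ⟨x, hx⟩
  set A : Set X := Y \ U with hA
  have hAclosed : IsClosed A := by
    have : A = Y ∩ Vᶜ := by
      ext x
      constructor
      · rintro ⟨hxY, hxU⟩
        exact ⟨hxY, fun hxV => hxU ((hiff x hxY).mp hxV)⟩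
      · rintro ⟨hxY, hxV⟩
        exact ⟨hxY, fun hxU => hxV ((hiff x hxY).mpr hxU)⟩
    rw [this]
    exact hYclosed.inter hVopen.isClosed_compl
  have hAne : A.Nonempty := ⟨z, hzY, hzU⟩
  have hYKA : Y ⊆ K ∪ A := by
    intro y hy
    by_cases h : y ∈ U
    · exact Or.inl (hUK h)
    · exact Or.inr ⟨hy, h⟩
  -- positive distance between f '' K (⊆ U) and A
  have hfKcompact : IsCompact (f '' K) := hKcompact.image hf
  have hfKU : f '' K ⊆ U := hmap
  obtain ⟨p₀, hp₀, hp₀min⟩ := hfKcompact.exists_isMinOn (hKne.image f)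
    (continuous_infDist_pt A).continuousOn
  set d : ℝ := infDist p₀ A with hd
  have hdpos : 0 < d := by
    rw [hd]
    refine (hAclosed.notMem_iff_infDist_pos hAne).mp ?_
    exact fun hmem => hmem.2 (hfKU hp₀)
  have hdK : ∀ p ∈ f '' K, d ≤ infDist p A := fun p hp => hp₀min hp
  -- uniform continuity
  obtain ⟨δ, hδpos, hδ⟩ := Metric.uniformContinuous_iff.mp
    (CompactSpace.uniformContinuous_of_continuous hf) (d / 3) (by linarith)
  set ε : ℝ := min δ (d / 3) with hε
  have hεpos : 0 < ε := lt_min hδpos (by linarith)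
  have hεδ : ε ≤ δ := min_le_left _ _
  have hεd : ε ≤ d / 3 := min_le_right _ _
  set ρ : ℝ := ε / 2 with hρ
  have hρpos : 0 < ρ := by positivity
  -- every point of Y is visited arbitrarily closely by arbitrarily late orbit points
  have horbY : ∀ y ∈ Y, ∀ N : ℕ, ∀ r : ℝ, 0 < r → ∃ n ≥ N, dist (f^[n] x₀) y < r := by
    intro y hy N r hr
    have hyc : y ∈ closure ((fun n => f^[n] x₀) '' Set.Ici N) := by
      rw [hY] at hy; exact mem_iInter.mp hy N
    obtain ⟨b, hb, hbd⟩ := Metric.mem_closure_iff.mp hyc r hr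
    obtain ⟨n, hn, rfl⟩ := hb
    exact ⟨n, hn, by rw [dist_comm]; exact hbd⟩
  -- the orbit converges to Y
  have htail : ∀ r : ℝ, 0 < r → ∃ N : ℕ, ∀ n ≥ N, infDist (f^[n] x₀) Y < r := by
    intro r hr
    by_contra h
    push_neg at h
    set C : Set X := {x | r ≤ infDist x Y} with hC
    have hCclosed : IsClosed C := isClosed_le continuous_const (continuous_infDist_pt Y)
    set t : ℕ → Set X := fun N => closure ((fun n => f^[n] x₀) '' Set.Ici N) ∩ C with ht
    have htsub : ∀ N, t (N + 1) ⊆ t N := fun N =>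
      inter_subset_inter
        (closure_mono (image_mono (Ici_subset_Ici.mpr (Nat.le_succ N)))) subset_rfl
    have htclosed : ∀ N, IsClosed (t N) := fun N => isClosed_closure.inter hCclosed
    have htne : ∀ N, (t N).Nonempty := by
      intro N
      obtain ⟨n, hn, hnr⟩ := h N
      exact ⟨f^[n] x₀, subset_closure ⟨n, hn, rfl⟩, hnr⟩
    obtain ⟨w, hw⟩ := IsCompact.nonempty_iInter_of_sequence_nonempty_isCompact_isClosed t
      htsub htne (htclosed 0).isCompact htclosed
    have hwY : w ∈ Y := by
      rw [hY]; exact mem_iInter.mpr fun N => (mem_iInter.mp hw N).1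
    have hwC : r ≤ infDist w Y := (mem_iInter.mp hw 0).2
    rw [infDist_zero_of_mem hwY] at hwC
    linarith
  -- the trapping step
  have hkey : ∀ n : ℕ, infDist (f^[n] x₀) K < ε → infDist (f^[n + 1] x₀) Y < ρ →
      infDist (f^[n + 1] x₀) K < ρ ∧ 2 * d / 3 ≤ infDist (f^[n + 1] x₀) A := by
    intro n hn htl
    obtain ⟨k, hkK, hkd⟩ := (infDist_lt_iff hKne).mp hn
    have hdist : dist (f^[n + 1] x₀) (f k) < d / 3 := by
      rw [Function.iterate_succ_apply']
      exact hδ (lt_of_lt_of_le hkd hεδ)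
    have hfar : 2 * d / 3 ≤ infDist (f^[n + 1] x₀) A := by
      have h1 := hdK (f k) ⟨k, hkK, rfl⟩
      have h2 : infDist (f k) A ≤ infDist (f^[n + 1] x₀) A + dist (f k) (f^[n + 1] x₀) :=
        infDist_le_infDist_add_dist
      rw [dist_comm] at hdist
      linarith
    refine ⟨?_, hfar⟩
    obtain ⟨y, hyY, hyd⟩ := (infDist_lt_iff hYne).mp htl
    rcases hYKA hyY with hyK | hyA
    · exact lt_of_le_of_lt (infDist_le_dist_of_mem hyK) hyd
    · exfalso
      have hle : infDist (f^[n + 1] x₀) A ≤ dist (f^[n + 1] x₀) y :=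
        infDist_le_dist_of_mem hyA
      linarith
  -- entering near U and trapping forever
  obtain ⟨N, hN⟩ := htail ρ hρpos
  obtain ⟨y₀, hy₀⟩ := hUne
  obtain ⟨n₀, hn₀N, hn₀d⟩ := horbY y₀ (hUY hy₀) N ε hεpos
  have hn₀K : infDist (f^[n₀] x₀) K < ε :=
    lt_of_le_of_lt (infDist_le_dist_of_mem (hUK hy₀)) hn₀d
  have hind : ∀ j : ℕ, infDist (f^[n₀ + j] x₀) K < ε := by
    intro j
    induction j with
    | zero => simpa using hn₀K
    | succ j ih =>
      have htl : infDist (f^[n₀ + j + 1] x₀) Y < ρ := hN _ (by omega)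
      have hstep := (hkey (n₀ + j) ih htl).1
      have h : infDist (f^[n₀ + j + 1] x₀) K < ε := by linarith
      exact h
  -- contradiction: z ∈ A is an ω-limit point, but the late orbit stays far from A
  obtain ⟨m, hm, hmd⟩ := horbY z hzY (n₀ + 1) (d / 2) (by linarith)
  obtain ⟨j, rfl⟩ : ∃ j, m = n₀ + j + 1 := ⟨m - n₀ - 1, by omega⟩
  have htl : infDist (f^[n₀ + j + 1] x₀) Y < ρ := hN _ (by omega)
  have h2 := (hkey (n₀ + j) (hind j) htl).2
  have h1 : infDist (f^[n₀ + j + 1] x₀) A ≤ dist (f^[n₀ + j + 1] x₀) z :=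
    infDist_le_dist_of_mem ⟨hzY, hzU⟩
  linarith
end

section
/- Let X be a nonempty compact metric space, let f : X → X be a continuous map, and let x₀ ∈ X. If the ω-limit set ω(x₀) is a finite set, then ω(x₀) consists of a single periodic cycle: there exist a point p ∈ ω(x₀) and an integer n ≥ 1 such that f^n(p) = p and ω(x₀) = { p, f(p), f²(p), …, f^{n-1}(p) }. -/
open Filter Topology Metric Set

/-- If the ω-limit set `Y = ω(x₀)` of a point `x₀` under a continuous map `f` of a
nonempty compact metric space is finite, then it consists of a single periodic cycle:
there are `p ∈ Y` and `n ≥ 1` with `f^[n] p = p` and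
`Y = { p, f p, f² p, …, f^[n-1] p }`. -/
theorem omegaLimit_finite_is_periodic_cycle
    {X : Type*} [MetricSpace X] [CompactSpace X] [Nonempty X]
    (f : X → X) (hf : Continuous f) (x₀ : X)
    (Y : Set X) (hY : Y = ⋂ N : ℕ, closure ((fun n => f^[n] x₀) '' Set.Ici N))
    (hfin : Y.Finite) :
    ∃ p ∈ Y, ∃ n : ℕ, 1 ≤ n ∧ f^[n] p = p ∧ Y = (fun k => f^[k] p) '' Set.Iio n := by
  set u : ℕ → X := fun n => f^[n] x₀ with hu
  -- membership characterization
  have hmem : ∀ y, y ∈ Y ↔ ∀ N : ℕ, ∀ ε > 0, ∃ n ≥ N, dist (u n) y < ε := by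
    intro y
    rw [hY, Set.mem_iInter]
    constructor
    · intro h N ε hε
      have h2 := h N
      rw [Metric.mem_closure_iff] at h2
      obtain ⟨z, ⟨n, hn, rfl⟩, hz⟩ := h2 ε hε
      exact ⟨n, hn, by rwa [dist_comm]⟩
    · intro h N
      rw [Metric.mem_closure_iff]
      intro ε hε
      obtain ⟨n, hn, hd⟩ := h N ε hε
      exact ⟨u n, ⟨n, hn, rfl⟩, by rwa [dist_comm]⟩
  -- Y is nonempty
  have hYne : Y.Nonempty := by
    rw [hY]
    apply IsCompact.nonempty_iInter_of_sequence_nonempty_isCompact_isClosed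
    · intro n
      exact closure_mono (Set.image_mono (Set.Ici_subset_Ici.mpr (Nat.le_succ n)))
    · intro n
      exact ⟨u n, subset_closure ⟨n, le_refl n, rfl⟩⟩
    · exact isClosed_closure.isCompact
    · intro n; exact isClosed_closure
  -- subsequence converging to any point of Y
  have hseq : ∀ y ∈ Y, ∃ φ : ℕ → ℕ, StrictMono φ ∧ Tendsto (u ∘ φ) atTop (𝓝 y) := by
    intro y hy
    have hfr : ∀ n : ℕ, ∃ᶠ k in atTop, dist (u k) y < 1 / (n + 1) := by
      intro n
      rw [Filter.frequently_atTop]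
      intro N
      obtain ⟨m, hm, hd⟩ := (hmem y).1 hy N (1 / (n + 1)) (by positivity)
      exact ⟨m, hm, hd⟩
    obtain ⟨φ, hφ, h⟩ := Filter.extraction_forall_of_frequently hfr
    refine ⟨φ, hφ, ?_⟩
    rw [tendsto_iff_dist_tendsto_zero]
    exact squeeze_zero (fun k => dist_nonneg) (fun k => (h k).le)
      tendsto_one_div_add_atTop_nhds_zero_nat
  -- Y is invariant
  have hinv : ∀ y ∈ Y, f y ∈ Y := by
    intro y hy
    obtain ⟨φ, hφ, hconv⟩ := hseq y hy
    rw [hmem]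
    intro N ε hε
    have hconv2 : Tendsto (fun k => u (φ k + 1)) atTop (𝓝 (f y)) := by
      have h2 := (hf.tendsto y).comp hconv
      convert h2 using 2 with k
      simp only [hu, Function.comp_apply, Function.iterate_succ_apply']
    have h3 : ∀ᶠ k in atTop, dist (u (φ k + 1)) (f y) < ε :=
      (Metric.tendsto_nhds.1 hconv2) ε hε
    have h4 : ∀ᶠ k in atTop, φ k + 1 ≥ N :=
      (hφ.tendsto_atTop.eventually_ge_atTop N).mono (fun k hk => le_trans hk (Nat.le_succ _))
    obtain ⟨k, hk1, hk2⟩ := (h3.and h4).exists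
    exact ⟨φ k + 1, hk2, hk1⟩
  -- separation of points of Y
  obtain ⟨ε, hε, hsep⟩ : ∃ ε > 0, ∀ y ∈ Y, ∀ z ∈ Y, dist y z < 3 * ε → y = z := by
    classical
    set s : Finset X := hfin.toFinset
    set t : Finset (X × X) := (s ×ˢ s).filter (fun q => q.1 ≠ q.2) with ht
    rcases t.eq_empty_or_nonempty with h | h
    · refine ⟨1, one_pos, fun y hy z hz _ => ?_⟩
      by_contra hne
      have : (y, z) ∈ t := by
        simp [ht, s, hfin.mem_toFinset, hy, hz, hne]
      simp [h] at this
    · obtain ⟨q, hq, hmin⟩ := t.exists_min_image (fun q => dist q.1 q.2) h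
      have hqne : q.1 ≠ q.2 := by
        simp only [ht, Finset.mem_filter] at hq
        exact hq.2
      have hqpos : 0 < dist q.1 q.2 := dist_pos.mpr hqne
      refine ⟨dist q.1 q.2 / 3, by positivity, fun y hy z hz hd => ?_⟩
      by_contra hne
      have hyz : (y, z) ∈ t := by
        simp [ht, s, hfin.mem_toFinset, hy, hz, hne]
      have := hmin (y, z) hyz
      simp only at this
      linarith [hd, this]
  -- uniform continuity
  obtain ⟨δ₀, hδ₀, hδ₀'⟩ : ∃ δ > 0, ∀ a b : X, dist a b < δ → dist (f a) (f b) < ε := by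
    have hu' := CompactSpace.uniformContinuous_of_continuous hf
    rw [Metric.uniformContinuous_iff] at hu'
    obtain ⟨δ, hδ, h⟩ := hu' ε hε
    exact ⟨δ, hδ, fun a b hab => h hab⟩
  set δ : ℝ := min δ₀ ε with hδdef
  have hδpos : 0 < δ := lt_min hδ₀ hε
  have hδle : δ ≤ ε := min_le_right _ _
  have hδle' : δ ≤ δ₀ := min_le_left _ _
  -- the orbit eventually stays close to Y
  have hattr : ∃ N, ∀ n ≥ N, ∃ y ∈ Y, dist (u n) y < δ := by
    by_contra h
    push_neg at h
    have hfr : ∃ᶠ n in atTop, ∀ y ∈ Y, δ ≤ dist (u n) y := by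
      rw [Filter.frequently_atTop]
      intro N
      obtain ⟨n, hn, hn'⟩ := h N
      exact ⟨n, hn, hn'⟩
    obtain ⟨φ, hφ, hP⟩ := Filter.extraction_of_frequently_atTop hfr
    obtain ⟨z, _, ψ, hψ, hconv⟩ :=
      isCompact_univ.tendsto_subseq (x := fun n => u (φ n)) (fun n => Set.mem_univ _)
    have hzY : z ∈ Y := by
      rw [hmem]
      intro N ε' hε'
      have h3 : ∀ᶠ k in atTop, dist (u (φ (ψ k))) z < ε' :=
        (Metric.tendsto_nhds.1 hconv) ε' hε'
      have h4 : ∀ᶠ k in atTop, φ (ψ k) ≥ N :=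
        ((hφ.comp hψ).tendsto_atTop.eventually_ge_atTop N)
      obtain ⟨k, hk1, hk2⟩ := (h3.and h4).exists
      exact ⟨φ (ψ k), hk2, hk1⟩
    have h5 : ∀ k, δ ≤ dist (u (φ (ψ k))) z := fun k => hP (ψ k) z hzY
    have h6 : ∀ᶠ k in atTop, dist (u (φ (ψ k))) z < δ :=
      (Metric.tendsto_nhds.1 hconv) δ hδpos
    obtain ⟨k, hk⟩ := h6.exists
    exact absurd (h5 k) (not_le.mpr hk)
  obtain ⟨N₀, hN₀⟩ := hattr
  -- choose shadowing points in Y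
  have hcex : ∀ n : ℕ, ∃ y : X, n ≥ N₀ → (y ∈ Y ∧ dist (u n) y < δ) := by
    intro n
    by_cases h : n ≥ N₀
    · obtain ⟨y, hy, hd⟩ := hN₀ n h
      exact ⟨y, fun _ => ⟨hy, hd⟩⟩
    · exact ⟨Classical.arbitrary X, fun h' => absurd h' h⟩
  choose c hc using hcex
  -- the shadow satisfies c (n+1) = f (c n)
  have hstep : ∀ n ≥ N₀, c (n + 1) = f (c n) := by
    intro n hn
    obtain ⟨hcY, hcd⟩ := hc n hn
    obtain ⟨hcY', hcd'⟩ := hc (n + 1) (le_trans hn (Nat.le_succ n))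
    have hu1 : u (n + 1) = f (u n) := Function.iterate_succ_apply' f n x₀
    have h1 : dist (u (n + 1)) (f (c n)) < ε := by
      rw [hu1]
      exact hδ₀' _ _ (lt_of_lt_of_le hcd hδle')
    have h2 : dist (c (n + 1)) (f (c n)) < 3 * ε := by
      calc dist (c (n + 1)) (f (c n)) ≤ dist (c (n + 1)) (u (n + 1)) + dist (u (n + 1)) (f (c n)) :=
            dist_triangle _ _ _
        _ < δ + ε := by rw [dist_comm] at hcd'; exact add_lt_add hcd' h1
        _ ≤ ε + ε := by linarith
        _ < 3 * ε := by linarith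
    exact hsep _ hcY' _ (hinv _ hcY) h2
  -- c (N₀ + k) = f^[k] (c N₀)
  have hiter : ∀ k : ℕ, c (N₀ + k) = f^[k] (c N₀) := by
    intro k
    induction k with
    | zero => simp
    | succ k ih =>
      have : N₀ + (k + 1) = (N₀ + k) + 1 := rfl
      rw [this, hstep (N₀ + k) (Nat.le_add_right _ _), ih, Function.iterate_succ_apply']
  -- every point of Y is some c m with m large
  have hhit : ∀ y ∈ Y, ∀ M : ℕ, ∃ m ≥ M, m ≥ N₀ ∧ c m = y := by
    intro y hy M
    obtain ⟨m, hm, hd⟩ := (hmem y).1 hy (max N₀ M) δ hδpos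
    have hmN₀ : m ≥ N₀ := le_trans (le_max_left _ _) hm
    obtain ⟨hcY, hcd⟩ := hc m hmN₀
    have : dist (c m) y < 3 * ε := by
      calc dist (c m) y ≤ dist (c m) (u m) + dist (u m) y := dist_triangle _ _ _
        _ < δ + δ := by rw [dist_comm] at hcd; exact add_lt_add hcd hd
        _ < 3 * ε := by linarith [hδle]
    exact ⟨m, le_trans (le_max_right _ _) hm, hmN₀, hsep _ hcY _ hy this⟩
  set p : X := c N₀ with hp
  have hpY : p ∈ Y := (hc N₀ le_rfl).1
  obtain ⟨m, hm1, hm2, hm3⟩ := hhit p hpY (N₀ + 1)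
  set n : ℕ := m - N₀ with hn
  have hn1 : 1 ≤ n := by omega
  have hmn : N₀ + n = m := by omega
  have hper : f^[n] p = p := by
    have := hiter n
    rw [hmn, hm3] at this
    exact this.symm
  refine ⟨p, hpY, n, hn1, hper, ?_⟩
  ext y
  constructor
  · intro hy
    obtain ⟨k, _, hk2, hk3⟩ := hhit y hy 0
    have hy' : y = f^[k - N₀] p := by
      rw [← hk3, ← hiter (k - N₀)]
      congr 1
      omega
    refine ⟨(k - N₀) % n, ?_, ?_⟩
    · exact Set.mem_Iio.mpr (Nat.mod_lt _ (by omega))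
    · have hperpt : Function.IsPeriodicPt f n p := hper
      simp only
      rw [hperpt.iterate_mod_apply, ← hy']
  · rintro ⟨k, _, rfl⟩
    simp only
    rw [← hiter k]
    exact (hc (N₀ + k) (Nat.le_add_right _ _)).1
end

section
/- Let U ⊆ ℂ² be an open neighborhood of (0,0), let G, H : U → ℂ be holomorphic (complex analytic) functions with G(0,0) = 0, H(0,0) = 0 and with the total (Fréchet) derivative of H vanishing at (0,0), and let λ, a ∈ ℂ with |λ| > 1. Let ψ be a holomorphic function on an open disk {x ∈ ℂ : |x| < ε₀} with ψ(0) = 0, whose graph {(x, ψ(x)) : |x| < ε₀} is contained in U, and suppose that for all |x| < ε₀ the following two identities hold: (i) λ·ψ(x) + a·x + H(x, ψ(x)) = 0, and (ii) ∂G/∂x(x, ψ(x)) · (λ + ∂H/∂y(x, ψ(x))) − ∂G/∂y(x, ψ(x)) · (a + ∂H/∂x(x, ψ(x))) = 0. Then there exists ε > 0 such that G(x, ψ(x)) = 0 for all |x| < ε. -/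
open Metric

/-- The key local computation in the super-saddle analysis: let `U ⊆ ℂ²` be an open
neighborhood of `(0,0)`, let `G, H : U → ℂ` be holomorphic with `G(0,0) = 0`,
`H(0,0) = 0`, and total derivative of `H` vanishing at `(0,0)`, and let `λ, a ∈ ℂ`
with `|λ| > 1`.  If `ψ` is holomorphic on `{|x| < ε₀}` with `ψ 0 = 0`, its graph lies
in `U`, and for all `|x| < ε₀`:
(i) `λ·ψ(x) + a·x + H(x, ψ(x)) = 0`, and
(ii) `∂G/∂x(x,ψ(x))·(λ + ∂H/∂y(x,ψ(x))) − ∂G/∂y(x,ψ(x))·(a + ∂H/∂x(x,ψ(x))) = 0`,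
then `G(x, ψ(x)) = 0` for all `x` in some disk `{|x| < ε}`. -/
theorem critical_graph_in_zero_locus
    (U : Set (ℂ × ℂ)) (hU : IsOpen U) (h0U : ((0 : ℂ), (0 : ℂ)) ∈ U)
    (G H : ℂ × ℂ → ℂ)
    (hG : DifferentiableOn ℂ G U) (hH : DifferentiableOn ℂ H U)
    (hG0 : G (0, 0) = 0) (hH0 : H (0, 0) = 0)
    (hH'0 : fderiv ℂ H (0, 0) = 0)
    (lam a : ℂ) (hlam : 1 < ‖lam‖)
    (ε₀ : ℝ) (hε₀ : 0 < ε₀)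
    (ψ : ℂ → ℂ) (hψ : DifferentiableOn ℂ ψ (ball (0 : ℂ) ε₀))
    (hψ0 : ψ 0 = 0)
    (hgraph : ∀ x ∈ ball (0 : ℂ) ε₀, (x, ψ x) ∈ U)
    (hi : ∀ x ∈ ball (0 : ℂ) ε₀, lam * ψ x + a * x + H (x, ψ x) = 0)
    (hii : ∀ x ∈ ball (0 : ℂ) ε₀,
      deriv (fun t => G (t, ψ x)) x * (lam + deriv (fun t => H (x, t)) (ψ x))
        - deriv (fun t => G (x, t)) (ψ x) * (a + deriv (fun t => H (t, ψ x)) x) = 0) :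
    ∃ ε > 0, ∀ x ∈ ball (0 : ℂ) ε, G (x, ψ x) = 0 := by

  classical
  set c : ℝ := ‖lam‖ with hc
  have hc1 : (1:ℝ) < c := hlam
  set ε' : ℝ := (c - 1) / 8 with hε'
  have hε'pos : 0 < ε' := by rw [hε']; linarith
  -- little-o bound for H near (0,0)
  have hHd : HasFDerivAt H (fderiv ℂ H ((0:ℂ), (0:ℂ))) ((0:ℂ), (0:ℂ)) :=
    (hH.differentiableAt (hU.mem_nhds h0U)).hasFDerivAt
  rw [hH'0] at hHd
  have hH0' : H (0 : ℂ × ℂ) = 0 := hH0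
  have hev : ∀ᶠ p : ℂ × ℂ in nhds ((0:ℂ),(0:ℂ)), ‖H p‖ ≤ ε' * ‖p‖ ∧ p ∈ U := by
    have h1 := hHd.isLittleO.def hε'pos
    have h2 : ∀ᶠ p : ℂ × ℂ in nhds ((0:ℂ),(0:ℂ)), p ∈ U := hU.mem_nhds h0U
    filter_upwards [h1, h2] with p hp1 hp2
    refine ⟨?_, hp2⟩
    simpa [hH0', hH0, Prod.mk_zero_zero] using hp1
  obtain ⟨δ, hδpos, hδ⟩ := Metric.eventually_nhds_iff_ball.mp hev
  have hδball : ∀ p : ℂ × ℂ, ‖p‖ < δ → ‖H p‖ ≤ ε' * ‖p‖ ∧ p ∈ U := by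
    intro p hp
    exact hδ p (by rw [Prod.mk_zero_zero, mem_ball_zero_iff]; exact hp)
  -- bound on the partial derivative ∂H/∂y near (0,0)
  have hHybound : ∀ x y : ℂ, ‖((x:ℂ), (y:ℂ))‖ < δ / 2 →
      ‖deriv (fun t => H (x, t)) y‖ ≤ 4 * ε' := by
    intro x y hxy
    have hxn : ‖x‖ < δ / 2 := lt_of_le_of_lt (by simp [Prod.norm_def, le_max_left] :
      ‖x‖ ≤ ‖((x:ℂ), (y:ℂ))‖) hxy
    have hyn : ‖y‖ < δ / 2 := lt_of_le_of_lt (by simp [Prod.norm_def, le_max_right] :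
      ‖y‖ ≤ ‖((x:ℂ), (y:ℂ))‖) hxy
    have hmem : ∀ t ∈ ball y (δ / 2), ‖((x:ℂ), (t:ℂ))‖ < δ := by
      intro t ht
      rw [mem_ball, dist_eq_norm] at ht
      have : ‖t‖ < δ := by
        calc ‖t‖ = ‖t - y + y‖ := by ring_nf
        _ ≤ ‖t - y‖ + ‖y‖ := norm_add_le _ _
        _ < δ / 2 + δ / 2 := by linarith
        _ = δ := by ring
      have hx' : ‖x‖ < δ := by linarith
      simp only [Prod.norm_def]
      exact max_lt hx' this
    have hdiff : DifferentiableOn ℂ (fun t => H (x, t)) (ball y (δ / 2)) := by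
      intro t ht
      have hUt : ((x:ℂ), (t:ℂ)) ∈ U := (hδball _ (hmem t ht)).2
      exact (((hH.differentiableAt (hU.mem_nhds hUt)).comp t
        ((differentiableAt_const x).prodMk differentiableAt_id)).differentiableWithinAt)
    have hmaps : Set.MapsTo (fun t => H (x, t)) (ball y (δ / 2))
        (ball (H (x, y)) (2 * ε' * δ)) := by
      intro t ht
      rw [mem_ball, dist_eq_norm]
      have h1 : ‖H (x, t)‖ ≤ ε' * δ := by
        have := (hδball _ (hmem t ht)).1
        have h2 : ε' * ‖((x:ℂ),(t:ℂ))‖ ≤ ε' * δ :=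
          mul_le_mul_of_nonneg_left (le_of_lt (hmem t ht)) (le_of_lt hε'pos)
        linarith
      have h2 : ‖H (x, y)‖ < ε' * (δ / 2) := by
        have hxyδ : ‖((x:ℂ),(y:ℂ))‖ < δ := by linarith
        have := (hδball _ hxyδ).1
        have h3 : ε' * ‖((x:ℂ),(y:ℂ))‖ < ε' * (δ / 2) :=
          (mul_lt_mul_iff_right₀ hε'pos).mpr hxy
        linarith
      calc ‖H (x, t) - H (x, y)‖ ≤ ‖H (x, t)‖ + ‖H (x, y)‖ := norm_sub_le _ _
      _ < ε' * δ + ε' * (δ / 2) := by linarith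
      _ ≤ 2 * ε' * δ := by nlinarith
    have := Complex.norm_deriv_le_div_of_mapsTo_ball hdiff (hmaps.mono_right ball_subset_closedBall) (by linarith : (0:ℝ) < δ / 2)
    calc ‖deriv (fun t => H (x, t)) y‖ ≤ 2 * ε' * δ / (δ / 2) := this
    _ = 4 * ε' := by field_simp; ring
  -- choose ε
  have hψc : ContinuousAt ψ 0 :=
    (hψ.differentiableAt (isOpen_ball.mem_nhds (mem_ball_self hε₀))).continuousAt
  have hev2 : ∀ᶠ x : ℂ in nhds 0, ψ x ∈ ball (0:ℂ) (δ / 2) := by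
    have := hψc.tendsto
    rw [hψ0] at this
    exact this (ball_mem_nhds _ (by linarith))
  have hev3 : ∀ᶠ x : ℂ in nhds 0, x ∈ ball (0:ℂ) (min ε₀ (δ / 2)) :=
    isOpen_ball.mem_nhds (mem_ball_self (lt_min hε₀ (by linarith)))
  obtain ⟨ε, hεpos, hεball⟩ := Metric.eventually_nhds_iff_ball.mp (hev2.and hev3)
  refine ⟨ε, hεpos, ?_⟩
  -- facts for each x in ball ε
  have hεsub : ∀ x ∈ ball (0:ℂ) ε, x ∈ ball (0:ℂ) ε₀ ∧ ‖((x:ℂ), ψ x)‖ < δ / 2 := by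
    intro x hx
    obtain ⟨h1, h2⟩ := hεball x hx
    rw [mem_ball, dist_eq_norm, sub_zero] at h1 h2
    constructor
    · rw [mem_ball, dist_eq_norm, sub_zero]
      exact lt_of_lt_of_le h2 (min_le_left _ _)
    · simp only [Prod.norm_def]
      exact max_lt (lt_of_lt_of_le h2 (min_le_right _ _)) h1
  have key : ∀ x ∈ ball (0:ℂ) ε, HasDerivAt (fun t => G (t, ψ t)) 0 x := by
    intro x hx
    obtain ⟨hx₀, hxδ⟩ := hεsub x hx
    have hpU : ((x:ℂ), ψ x) ∈ U := hgraph x hx₀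
    set p : ℂ × ℂ := (x, ψ x) with hp
    have hψx : HasDerivAt ψ (deriv ψ x) x :=
      (hψ.differentiableAt (isOpen_ball.mem_nhds hx₀)).hasDerivAt
    set d : ℂ := deriv ψ x with hd
    have hFG : HasFDerivAt G (fderiv ℂ G p) p :=
      (hG.differentiableAt (hU.mem_nhds hpU)).hasFDerivAt
    have hFH : HasFDerivAt H (fderiv ℂ H p) p :=
      (hH.differentiableAt (hU.mem_nhds hpU)).hasFDerivAt
    set FG := fderiv ℂ G p with hFGdef
    set FH := fderiv ℂ H p with hFHdef
    have line1 : HasDerivAt (fun t : ℂ => ((t:ℂ), ψ x)) (((1:ℂ), (0:ℂ))) x :=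
      (hasDerivAt_id x).prodMk (hasDerivAt_const x (ψ x))
    have line2 : HasDerivAt (fun t : ℂ => ((x:ℂ), (t:ℂ))) (((0:ℂ), (1:ℂ))) (ψ x) :=
      (hasDerivAt_const (ψ x) x).prodMk (hasDerivAt_id (ψ x))
    have graphline : HasDerivAt (fun t : ℂ => ((t:ℂ), ψ t)) (((1:ℂ), d)) x :=
      (hasDerivAt_id x).prodMk hψx
    have dGx : deriv (fun t => G (t, ψ x)) x = FG ((1:ℂ), (0:ℂ)) :=
      (hFG.comp_hasDerivAt x line1).deriv
    have dGy : deriv (fun t => G (x, t)) (ψ x) = FG ((0:ℂ), (1:ℂ)) :=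
      (hFG.comp_hasDerivAt (ψ x) line2).deriv
    have dHx : deriv (fun t => H (t, ψ x)) x = FH ((1:ℂ), (0:ℂ)) :=
      (hFH.comp_hasDerivAt x line1).deriv
    have dHy : deriv (fun t => H (x, t)) (ψ x) = FH ((0:ℂ), (1:ℂ)) :=
      (hFH.comp_hasDerivAt (ψ x) line2).deriv
    set Gx : ℂ := FG ((1:ℂ), (0:ℂ))
    set Gy : ℂ := FG ((0:ℂ), (1:ℂ))
    set Hx : ℂ := FH ((1:ℂ), (0:ℂ))
    set Hy : ℂ := FH ((0:ℂ), (1:ℂ))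
    have decompG : FG ((1:ℂ), d) = Gx + d * Gy := by
      have h1 : ((1:ℂ), d) = ((1:ℂ), (0:ℂ)) + d • ((0:ℂ), (1:ℂ)) := by
        simp [Prod.ext_iff]
      rw [h1, map_add, map_smul, smul_eq_mul]
    have decompH : FH ((1:ℂ), d) = Hx + d * Hy := by
      have h1 : ((1:ℂ), d) = ((1:ℂ), (0:ℂ)) + d • ((0:ℂ), (1:ℂ)) := by
        simp [Prod.ext_iff]
      rw [h1, map_add, map_smul, smul_eq_mul]
    -- differentiate identity (i)
    have hF : HasDerivAt (fun t => lam * ψ t + a * t + H (t, ψ t))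
        (lam * d + a * 1 + FH ((1:ℂ), d)) x :=
      ((hψx.const_mul lam).add ((hasDerivAt_id x).const_mul a)).add
        (hFH.comp_hasDerivAt x graphline)
    have hFzero : (fun t => lam * ψ t + a * t + H (t, ψ t)) =ᶠ[nhds x] fun _ => (0:ℂ) := by
      filter_upwards [isOpen_ball.mem_nhds hx₀] with t ht
      exact hi t ht
    have e1 : lam * d + a * 1 + FH ((1:ℂ), d) = 0 := by
      have h0 : HasDerivAt (fun _ : ℂ => (0:ℂ)) (lam * d + a * 1 + FH ((1:ℂ), d)) x :=
        hF.congr_of_eventuallyEq hFzero.symm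
      exact ((hasDerivAt_const x (0:ℂ)).unique h0).symm
    have e1' : lam * d + a + (Hx + d * Hy) = 0 := by
      rw [decompH] at e1; linear_combination e1
    -- identity (ii)
    have e2 : Gx * (lam + Hy) - Gy * (a + Hx) = 0 := by
      have := hii x hx₀
      rwa [dGx, dGy, dHx, dHy] at this
    -- nonvanishing of lam + Hy
    have hHysmall : ‖Hy‖ ≤ 4 * ε' := by
      rw [← dHy]; exact hHybound x (ψ x) hxδ
    have qne : lam + Hy ≠ 0 := by
      intro h
      have h1 : ‖lam‖ = ‖Hy‖ := by
        rw [show lam = -Hy from by linear_combination h, norm_neg]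
      have h2 : ‖Hy‖ ≤ (c - 1) / 2 := by
        calc ‖Hy‖ ≤ 4 * ε' := hHysmall
        _ = (c - 1) / 2 := by rw [hε']; ring
      have h3 : c = ‖Hy‖ := by rw [hc, h1]
      linarith
    -- conclude
    have keyeq : (lam + Hy) * (Gx + d * Gy) = 0 := by
      linear_combination e2 + Gy * e1'
    have hzero : Gx + d * Gy = 0 := (mul_eq_zero.mp keyeq).resolve_left qne
    have hgd : HasDerivAt (fun t => G (t, ψ t)) (FG ((1:ℂ), d)) x :=
      hFG.comp_hasDerivAt x graphline
    rw [decompG, hzero] at hgd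
    exact hgd
  -- g is constant on the ball
  intro x hx
  have hconst := (convex_ball (0:ℂ) ε).norm_image_sub_le_of_norm_hasDerivWithin_le
    (f := fun t => G (t, ψ t)) (f' := fun _ => (0:ℂ)) (C := 0)
    (fun t ht => (key t ht).hasDerivWithinAt)
    (fun t _ => by simp) hx (mem_ball_self hεpos)
  have h1 : ‖G ((0:ℂ), ψ 0) - G (x, ψ x)‖ ≤ 0 := by simpa using hconst
  have h2 : G ((0:ℂ), ψ 0) = G (x, ψ x) := sub_eq_zero.mp (norm_le_zero_iff.mp h1)
  rw [← h2, hψ0]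
  exact hG0
end

section
/- Let 𝔻 = { z ∈ ℂ : |z| < 1 } be the open unit disk, let Z be a topological space, let Φ : 𝔻 → Z be a continuous map, and let x ∈ Z. Suppose there exists an open neighborhood U of x in Z such that every connected component of Φ⁻¹(U) has compact closure contained in 𝔻 (i.e., every connected component of Φ⁻¹(U) is relatively compact in 𝔻). Then for every θ ∈ ℝ, the radial limit lim_{r → 1⁻} Φ(r·e^{iθ}) does not equal x; that is, it is not the case that Φ(r·e^{iθ}) → x as r → 1 from the left. -/
open Metric Filter

/-- Let `Φ` be a continuous map from the open unit disk `𝔻 ⊆ ℂ` to a topological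
space `Z`, and let `x ∈ Z`.  If there is an open neighborhood `U` of `x` such that
every connected component of `Φ⁻¹(U)` (inside `𝔻`) is relatively compact in `𝔻`
(its closure is compact and contained in `𝔻`), then for every `θ ∈ ℝ` the radial
limit `lim_{r → 1⁻} Φ(r·e^{iθ})` is not equal to `x`. -/
theorem radial_limit_avoids_relatively_compact_preimage
    {Z : Type*} [TopologicalSpace Z]
    (Φ : ℂ → Z) (hΦ : ContinuousOn Φ (ball (0 : ℂ) 1))
    (x : Z) (U : Set Z) (hUopen : IsOpen U) (hxU : x ∈ U)
    (hcomp : ∀ z ∈ ball (0 : ℂ) 1 ∩ Φ ⁻¹' U,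
      IsCompact (closure (connectedComponentIn (ball (0 : ℂ) 1 ∩ Φ ⁻¹' U) z)) ∧
      closure (connectedComponentIn (ball (0 : ℂ) 1 ∩ Φ ⁻¹' U) z) ⊆ ball (0 : ℂ) 1)
    (θ : ℝ) :
    ¬ Tendsto (fun r : ℝ => Φ ((r : ℂ) * Complex.exp (θ * Complex.I)))
        (nhdsWithin 1 (Set.Iio 1)) (nhds x) := by
  intro h
  set f : ℝ → ℂ := fun r => (r : ℂ) * Complex.exp (θ * Complex.I) with hf
  have hfc : Continuous f := by continuity
  have hmem : {r : ℝ | Φ (f r) ∈ U} ∈ nhdsWithin (1 : ℝ) (Set.Iio 1) :=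
    h (hUopen.mem_nhds hxU)
  obtain ⟨a, ha, haI⟩ := mem_nhdsLT_iff_exists_Ioo_subset.mp hmem
  set b : ℝ := max a 0 with hb
  have hb1 : b < 1 := by
    simp only [hb, max_lt_iff]
    exact ⟨ha, one_pos⟩
  have hnorm : ∀ r : ℝ, ‖f r‖ = |r| := by
    intro r
    simp [hf, Complex.norm_exp_ofReal_mul_I]
  have hIoo : ∀ r ∈ Set.Ioo b 1, f r ∈ ball (0 : ℂ) 1 ∩ Φ ⁻¹' U := by
    intro r hr
    refine ⟨?_, haI ⟨lt_of_le_of_lt (le_max_left a 0) hr.1, hr.2⟩⟩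
    rw [mem_ball, dist_zero_right, hnorm,
      abs_of_nonneg (le_of_lt (lt_of_le_of_lt (le_max_right a 0) hr.1))]
    exact hr.2
  set S : Set ℂ := ball (0 : ℂ) 1 ∩ Φ ⁻¹' U with hS
  set r₀ : ℝ := (b + 1) / 2 with hr₀
  have hr₀mem : r₀ ∈ Set.Ioo b 1 := ⟨by linarith, by linarith⟩
  have hz₀ : f r₀ ∈ S := hIoo r₀ hr₀mem
  have hconn : IsPreconnected (f '' Set.Ioo b 1) :=
    (isPreconnected_Ioo).image f hfc.continuousOn
  have hsub : f '' Set.Ioo b 1 ⊆ connectedComponentIn S (f r₀) :=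
    hconn.subset_connectedComponentIn ⟨r₀, hr₀mem, rfl⟩
      (fun z ⟨r, hr, hrz⟩ => hrz ▸ hIoo r hr)
  have hcl : f 1 ∈ closure (f '' Set.Ioo b 1) := by
    have h1 : (1 : ℝ) ∈ closure (Set.Ioo b 1) := by
      rw [closure_Ioo (ne_of_lt hb1)]
      exact ⟨le_of_lt hb1, le_refl 1⟩
    exact image_closure_subset_closure_image hfc ⟨1, h1, rfl⟩
  have hball : f 1 ∈ ball (0 : ℂ) 1 :=
    (hcomp (f r₀) hz₀).2 (closure_mono hsub hcl)
  rw [mem_ball, dist_zero_right, hnorm] at hball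
  simp at hball
end
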